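/- Assume (B1)–(B3) and fix λ > 0, σ ∈ (0,1), c > 0, z⁻ ∈ H, p⁻ ∈ ℝ^ℓ. Set L^ψ := λ(L_f + L_g‖p⁻‖ + c(B_g^{(0)}L_g + (B_g^{(1)})²)) + 1 and σ' := σ/√(L^ψ). Suppose (z, v, ε) ∈ H × ℝ^n × ℝ_+ satisfies v ∈ ∂_ε(λ L_c(·;p⁻) + (1/2)‖·−z⁻‖²)(z) and ‖v‖² + 2ε ≤ (σ')²‖v + z⁻ − z‖². Define r := v + z⁻ − z, δ := ε/λ, p := Π_{K*}(p⁻ + c g(z)), ẑ := argmin_u {λ(⟨∇f(z) + ∇g(z)p, u−z⟩ + h(u)) − ⟨r, u−z⟩ + (L^ψ/2)‖u−z‖²}, w := (r + L^ψ(z − ẑ))/λ, and ξ := w − ∇f(z) − ∇g(z)p. Then ξ ∈ ∂_δ h(z), ‖r‖ ≤ D_h/(1−σ), δ ≤ (1/(2λ))(σD_h/(1−σ))², and ‖w‖ ≤ (1+σ)D_h/(λ(1−σ)). -/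

import Mathlib

open RealInnerProductSpace Pointwise

/-- The dual cone of a set in a real inner product space. -/
def dualCone {F : Type*} [NormedAddCommGroup F] [InnerProductSpace ℝ F] (K : Set F) : Set F :=
  {y | ∀ x ∈ K, 0 ≤ ⟪y, x⟫}

/-- `p` is the Euclidean projection of `x` onto `S`. -/
def IsProjOn {F : Type*} [NormedAddCommGroup F] [InnerProductSpace ℝ F]
    (S : Set F) (x p : F) : Prop :=
  p ∈ S ∧ ∀ y ∈ S, dist x p ≤ dist x y

/-- `g` is `K`-convex. -/
def KConvex {E F : Type*} [NormedAddCommGroup E] [InnerProductSpace ℝ E]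
    [NormedAddCommGroup F] [InnerProductSpace ℝ F] (K : Set F) (g : E → F) : Prop :=
  ∀ z z' : E, ∀ t : ℝ, t ∈ Set.Icc (0 : ℝ) 1 →
    g (t • z' + (1 - t) • z) - t • g z' - (1 - t) • g z ∈ -K

/-- The ε-subdifferential at `z` of a proper extended-real-valued function represented by
its effective domain `D` and its real values `ψ` on `D` (the function equals `+∞` off `D`). -/
def epsSubdiff {E : Type*} [NormedAddCommGroup E] [InnerProductSpace ℝ E]
    (D : Set E) (ψ : E → ℝ) (ε : ℝ) (z : E) : Set E :=
  {u | ∀ z' ∈ D, ψ z + ⟪u, z' - z⟫ - ε ≤ ψ z'}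

/-- The augmented Lagrangian `L_c(z;p)`; the proper closed convex function `h` is represented
by its real values on its effective domain `H`. -/
noncomputable def AugLag {E F : Type*} [NormedAddCommGroup E] [InnerProductSpace ℝ E]
    [NormedAddCommGroup F] [InnerProductSpace ℝ F]
    (K : Set F) (f h : E → ℝ) (g : E → F) (c : ℝ) (z : E) (p : F) : ℝ :=
  f z + h z + (1 / (2 * c)) * ((Metric.infDist (p + c • g z) (-K)) ^ 2 - ‖p‖ ^ 2)

lemma deriv_half {q q' : ℝ → ℝ} {M : ℝ}
    (hd : ∀ t ∈ Set.Icc (0:ℝ) 1, HasDerivAt q (q' t) t)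
    (hlip : ∀ t ∈ Set.Icc (0:ℝ) 1, q' t - q' 0 ≤ M * t) :
    q 1 - q 0 - q' 0 ≤ M / 2 := by
  set φ : ℝ → ℝ := fun t => q t - t * q' 0 - M / 2 * t ^ 2 with hφ
  have hder : ∀ t ∈ Set.Icc (0:ℝ) 1, HasDerivAt φ (q' t - q' 0 - M * t) t := by
    intro t ht
    have h1 : HasDerivAt (fun t : ℝ => t * q' 0) (q' 0) t := by
      simpa using (hasDerivAt_id t).mul_const (q' 0)
    have h2 : HasDerivAt (fun t : ℝ => M / 2 * t ^ 2) (M * t) t := by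
      have := (hasDerivAt_pow 2 t).const_mul (M / 2)
      simpa using this.congr_deriv (by ring)
    exact ((hd t ht).sub h1).sub h2
  have hanti : AntitoneOn φ (Set.Icc 0 1) := by
    apply antitoneOn_of_deriv_nonpos (convex_Icc 0 1)
    · exact fun t ht => (hder t ht).continuousAt.continuousWithinAt
    · intro t ht
      rw [interior_Icc] at ht
      exact (hder t (Set.Ioo_subset_Icc_self ht)).differentiableAt.differentiableWithinAt
    · intro t ht
      rw [interior_Icc] at ht
      rw [(hder t (Set.Ioo_subset_Icc_self ht)).deriv]
      have := hlip t (Set.Ioo_subset_Icc_self ht)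
      linarith
  have h01 := hanti (Set.left_mem_Icc.2 zero_le_one) (Set.right_mem_Icc.2 zero_le_one) zero_le_one
  simp only [hφ] at h01
  norm_num at h01
  linarith

lemma taylor_half {E F : Type*} [NormedAddCommGroup E] [InnerProductSpace ℝ E]
    [NormedAddCommGroup F] [InnerProductSpace ℝ F]
    {s : Set E} (hs : Convex ℝ s) {g : E → F} {g' : E → E →L[ℝ] F} {L : ℝ} (hL : 0 ≤ L)
    (hdiff : ∀ u ∈ s, HasFDerivAt g (g' u) u)
    {x y : E} (hx : x ∈ s) (hy : y ∈ s)
    (hlip : ∀ u ∈ s, ‖g' u - g' x‖ ≤ L * ‖u - x‖) :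
    ‖g y - g x - g' x (y - x)‖ ≤ L / 2 * ‖y - x‖ ^ 2 := by
  set d := y - x with hd
  set u := g y - g x - g' x d with hu
  by_cases hu0 : u = 0
  · rw [hu0]
    simp
    positivity
  have hmem : ∀ t ∈ Set.Icc (0:ℝ) 1, x + t • d ∈ s := by
    intro t ht
    have : x + t • d = (1 - t) • x + t • y := by
      rw [hd]; module
    rw [this]
    exact hs hx hy (by linarith [ht.2]) ht.1 (by ring)
  have key : ∀ t ∈ Set.Icc (0:ℝ) 1,
      HasDerivAt (fun t : ℝ => ⟪u, g (x + t • d)⟫) ⟪u, g' (x + t • d) d⟫ t := by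
    intro t ht
    have hline : HasDerivAt (fun t : ℝ => x + t • d) d t := by
      simpa using ((hasDerivAt_id t).smul_const d).const_add x
    have hcomp : HasDerivAt (fun t : ℝ => g (x + t • d)) (g' (x + t • d) d) t :=
      (hdiff _ (hmem t ht)).comp_hasDerivAt t hline
    simpa using (hasDerivAt_const t u).inner ℝ hcomp
  have hql : ∀ t ∈ Set.Icc (0:ℝ) 1,
      ⟪u, g' (x + t • d) d⟫ - ⟪u, g' (x + (0:ℝ) • d) d⟫ ≤ (L * ‖u‖ * ‖d‖ ^ 2) * t := by
    intro t ht
    have h0 : (0:ℝ) ∈ Set.Icc (0:ℝ) 1 := Set.left_mem_Icc.2 zero_le_one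
    have e : ⟪u, g' (x + t • d) d⟫ - ⟪u, g' (x + (0:ℝ) • d) d⟫
        = ⟪u, (g' (x + t • d) - g' (x + (0:ℝ) • d)) d⟫ := by
      simp [inner_sub_right]
    rw [e]
    have hb : ‖(g' (x + t • d) - g' (x + (0:ℝ) • d)) d‖ ≤ (L * (t * ‖d‖)) * ‖d‖ := by
      calc ‖(g' (x + t • d) - g' (x + (0:ℝ) • d)) d‖
          ≤ ‖g' (x + t • d) - g' (x + (0:ℝ) • d)‖ * ‖d‖ := ContinuousLinearMap.le_opNorm _ _
        _ ≤ (L * (t * ‖d‖)) * ‖d‖ := by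
            apply mul_le_mul_of_nonneg_right _ (norm_nonneg d)
            simp only [zero_smul, add_zero]
            calc ‖g' (x + t • d) - g' x‖ ≤ L * ‖x + t • d - x‖ := hlip _ (hmem t ht)
              _ = L * (t * ‖d‖) := by
                  rw [add_sub_cancel_left, norm_smul, Real.norm_eq_abs, abs_of_nonneg ht.1]
    calc ⟪u, (g' (x + t • d) - g' (x + (0:ℝ) • d)) d⟫
        ≤ ‖u‖ * ‖(g' (x + t • d) - g' (x + (0:ℝ) • d)) d‖ := real_inner_le_norm _ _
      _ ≤ ‖u‖ * ((L * (t * ‖d‖)) * ‖d‖) := by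
          exact mul_le_mul_of_nonneg_left hb (norm_nonneg u)
      _ = (L * ‖u‖ * ‖d‖ ^ 2) * t := by ring
  have main := deriv_half key hql
  have ey : x + d = y := by simp [hd]
  simp only [one_smul, zero_smul, add_zero, ey] at main
  have hinner : ⟪u, g y⟫ - ⟪u, g x⟫ - ⟪u, g' x d⟫ = ‖u‖ ^ 2 := by
    rw [← inner_sub_right, ← inner_sub_right, ← hu, real_inner_self_eq_norm_sq]
  rw [hinner] at main
  have hupos : 0 < ‖u‖ := norm_pos_iff.2 hu0
  have : ‖u‖ ^ 2 ≤ ‖u‖ * (L / 2 * ‖d‖ ^ 2) := by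
    calc ‖u‖ ^ 2 ≤ L * ‖u‖ * ‖d‖ ^ 2 / 2 := main
      _ = ‖u‖ * (L / 2 * ‖d‖ ^ 2) := by ring
  have := (mul_le_mul_iff_right₀ hupos).1 (by nlinarith [this] : ‖u‖ * ‖u‖ ≤ ‖u‖ * (L / 2 * ‖d‖ ^ 2))
  exact this

lemma norm_combo {E : Type*} [NormedAddCommGroup E] [InnerProductSpace ℝ E] (a b : E) (t : ℝ) :
    ‖t • a + (1 - t) • b‖ ^ 2
      = t * ‖a‖ ^ 2 + (1 - t) * ‖b‖ ^ 2 - t * (1 - t) * ‖a - b‖ ^ 2 := by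
  simp only [← real_inner_self_eq_norm_sq, inner_add_add_self, inner_sub_sub_self,
    real_inner_smul_left, real_inner_smul_right, real_inner_comm a b]
  ring

lemma proj_facts {F : Type*} [NormedAddCommGroup F] [InnerProductSpace ℝ F]
    [FiniteDimensional ℝ F]
    (K : Set F) (hKne : K.Nonempty) (hKcl : IsClosed K) (hKcvx : Convex ℝ K)
    (hKcone : ∀ t : ℝ, 0 < t → ∀ x ∈ K, t • x ∈ K)
    {y p : F} (hp : IsProjOn (dualCone K) y p) :
    p ∈ dualCone K ∧ y - p ∈ -K ∧ ‖p‖ ≤ ‖y‖ ∧ Metric.infDist y (-K) = ‖p‖ := by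
  obtain ⟨hpK, hmin⟩ := hp
  -- dual cone basics
  have hzero : (0 : F) ∈ dualCone K := by intro x hx; simp
  have hsmul : ∀ t : ℝ, 0 ≤ t → ∀ q ∈ dualCone K, t • q ∈ dualCone K := by
    intro t ht q hq x hx
    rw [real_inner_smul_left]
    exact mul_nonneg ht (hq x hx)
  have hcvx : Convex ℝ (dualCone K) := by
    intro q1 hq1 q2 hq2 a b ha hb hab x hx
    rw [inner_add_left, real_inner_smul_left, real_inner_smul_left]
    have := hq1 x hx; have := hq2 x hx
    positivity
  -- variational inequality
  have hvar : ∀ q ∈ dualCone K, ⟪y - p, q - p⟫ ≤ 0 := by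
    intro q hq
    by_cases hqp : q = p
    · simp [hqp]
    have hQ0 : (0:ℝ) < ‖q - p‖ ^ 2 := by
      have h0 : (0:ℝ) < ‖q - p‖ := norm_pos_iff.2 (sub_ne_zero.2 hqp)
      positivity
    have key : ∀ t : ℝ, 0 < t → t ≤ 1 → ⟪y - p, q - p⟫ ≤ t / 2 * ‖q - p‖ ^ 2 := by
      intro t ht0 ht1
      have hmem : p + t • (q - p) ∈ dualCone K := by
        have e : p + t • (q - p) = (1 - t) • p + t • q := by module
        rw [e]
        exact hcvx hpK hq (by linarith) (le_of_lt ht0) (by ring)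
      have h1 := hmin _ hmem
      rw [dist_eq_norm, dist_eq_norm] at h1
      have e : y - (p + t • (q - p)) = (y - p) - t • (q - p) := by abel
      rw [e] at h1
      have h2 : ‖y - p‖ ^ 2 ≤ ‖(y - p) - t • (q - p)‖ ^ 2 := by
        have := norm_nonneg (y - p); nlinarith
      have hexp : ‖(y - p) - t • (q - p)‖ ^ 2
          = ‖y - p‖ ^ 2 - 2 * (t * ⟪y - p, q - p⟫) + t ^ 2 * ‖q - p‖ ^ 2 := by
        rw [norm_sub_sq_real, real_inner_smul_right, norm_smul, Real.norm_eq_abs,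
          abs_of_nonneg (le_of_lt ht0), mul_pow]
      rw [hexp] at h2
      nlinarith
    by_contra hA
    push_neg at hA
    set A := ⟪y - p, q - p⟫ with hAdef
    set t := min 1 (A / ‖q - p‖ ^ 2) with htdef
    have ht0 : 0 < t := lt_min one_pos (div_pos hA hQ0)
    have ht1 : t ≤ 1 := min_le_left _ _
    have hk := key t ht0 ht1
    have h5 : t / 2 * ‖q - p‖ ^ 2 ≤ A / 2 := by
      have htr : t ≤ A / ‖q - p‖ ^ 2 := min_le_right _ _
      calc t / 2 * ‖q - p‖ ^ 2 ≤ (A / ‖q - p‖ ^ 2) / 2 * ‖q - p‖ ^ 2 := by nlinarith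
        _ = A / 2 := by
          rw [div_div, div_mul_eq_mul_div, div_eq_div_iff (mul_pos hQ0 two_pos).ne' (by norm_num)]; ring
    linarith
  -- complementarity
  have hcompl : ⟪y - p, p⟫ = 0 := by
    have h1 := hvar 0 hzero
    have h2 := hvar ((2:ℝ) • p) (hsmul 2 (by norm_num) p hpK)
    rw [zero_sub, inner_neg_right] at h1
    have e : (2:ℝ) • p - p = p := by module
    rw [e] at h2
    linarith
  -- all dual-cone elements
  have hneg : ∀ q ∈ dualCone K, ⟪y - p, q⟫ ≤ 0 := by
    intro q hq
    have := hvar q hq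
    rw [inner_sub_right] at this
    linarith [this, hcompl]
  -- bipolar
  have hyp : y - p ∈ -K := by
    rw [Set.mem_neg, show -(y - p) = p - y by abel]
    by_contra hnot
    obtain ⟨f, u, hfu, hux⟩ := geometric_hahn_banach_closed_point hKcvx hKcl hnot
    have hfa : ∀ a ∈ K, f a ≤ 0 := by
      intro a ha
      by_contra hpos
      push_neg at hpos
      have := hfu (((|u| + 1) / f a) • a) (hKcone _ (div_pos (by positivity) hpos) a ha)
      rw [map_smul, smul_eq_mul, div_mul_cancel₀ _ hpos.ne'] at this
      linarith [le_abs_self u]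
    have hu : 0 ≤ u := by
      obtain ⟨a, ha⟩ := hKne
      by_contra hneg'
      push_neg at hneg'
      rcases (hfa a ha).lt_or_eq with hlt | heq
      · have := hfu ((u / (2 * f a)) • a)
          (hKcone _ (div_pos_of_neg_of_neg hneg' (by linarith)) a ha)
        have e : u / (2 * f a) * f a = u / 2 := by field_simp [hlt.ne]
        rw [map_smul, smul_eq_mul, e] at this
        linarith
      · have := hfu a ha
        linarith
    set q := (InnerProductSpace.toDual ℝ F).symm f
    have hqd : -q ∈ dualCone K := by
      intro x hx
      rw [inner_neg_left, InnerProductSpace.toDual_symm_apply]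
      linarith [hfa x hx]
    have h1 := hneg (-q) hqd
    have e : ⟪y - p, -q⟫ = f (p - y) := by
      rw [inner_neg_right, real_inner_comm, ← inner_neg_right, neg_sub,
        InnerProductSpace.toDual_symm_apply]
    linarith
  -- norm bound
  have hpy : ‖p‖ ≤ ‖y‖ := by
    have h1 : ‖p‖ ^ 2 = ⟪y, p⟫ := by
      have := hcompl
      rw [inner_sub_left] at this
      rw [← real_inner_self_eq_norm_sq]
      linarith
    have h2 : ⟪y, p⟫ ≤ ‖y‖ * ‖p‖ := real_inner_le_norm y p
    nlinarith [norm_nonneg p, norm_nonneg y]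
  -- infDist
  have hdist : Metric.infDist y (-K) = ‖p‖ := by
    have hle : Metric.infDist y (-K) ≤ ‖p‖ := by
      have := Metric.infDist_le_dist_of_mem (x := y) hyp
      rwa [dist_eq_norm, show y - (y - p) = p by abel] at this
    have hge : ‖p‖ ≤ Metric.infDist y (-K) := by
      by_contra hlt
      push_neg at hlt
      obtain ⟨s, hs, hds⟩ := (Metric.infDist_lt_iff (by
        obtain ⟨x0, hx0⟩ := hKne
        exact ⟨-x0, Set.mem_neg.2 (by simpa using hx0)⟩)).1 hlt
      rw [dist_eq_norm] at hds
      have hsK : -s ∈ K := Set.mem_neg.1 hs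
      have hinn : 0 ≤ ⟪p, -s⟫ := hpK (-s) hsK
      have e : y - s = p + (y - p - s) := by abel
      have h2 : ‖y - s‖ ^ 2 = ‖p‖ ^ 2 + 2 * ⟪p, y - p - s⟫ + ‖y - p - s‖ ^ 2 := by
        rw [e, norm_add_sq_real]
      have h3 : ⟪p, y - p - s⟫ = ⟪p, y - p⟫ + ⟪p, -s⟫ := by
        rw [← inner_add_right]
        congr 1
        abel
      have h4 : ⟪p, y - p⟫ = 0 := by rw [real_inner_comm]; exact hcompl
      have h5 : ‖p‖ ^ 2 ≤ ‖y - s‖ ^ 2 := by nlinarith [sq_nonneg ‖y - p - s‖, norm_nonneg (y-p-s)]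
      nlinarith [norm_nonneg p, norm_nonneg (y - s)]
    linarith
  exact ⟨hpK, hyp, hpy, hdist⟩

set_option maxHeartbeats 1600000 in
/-- key inclusion and residual bounds for one NL-IAPIAL prox step
(Lemma 4.1 of the paper). -/
theorem residual_bounds
    {E F : Type*}
    [NormedAddCommGroup E] [InnerProductSpace ℝ E] [FiniteDimensional ℝ E]
    [NormedAddCommGroup F] [InnerProductSpace ℝ F] [FiniteDimensional ℝ F]
    -- K is a nonempty closed convex cone
    (K : Set F) (hKne : K.Nonempty) (hKcl : IsClosed K) (hKcvx : Convex ℝ K)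
    (hKcone : ∀ t : ℝ, 0 < t → ∀ x ∈ K, t • x ∈ K)
    -- (B1): h proper closed convex, K_h-Lipschitz on its compact domain H of diameter ≤ Dh
    (H : Set E) (h : E → ℝ) (Kh Dh : ℝ) (hKh : 0 < Kh) (hDh0 : 0 < Dh)
    (hHne : H.Nonempty) (hHcpt : IsCompact H) (hHcvx : Convex ℝ H)
    (hhcvx : ConvexOn ℝ H h)
    (hhlip : ∀ x ∈ H, ∀ y ∈ H, |h x - h y| ≤ Kh * ‖x - y‖)
    (hDh : ∀ x ∈ H, ∀ y ∈ H, ‖x - y‖ ≤ Dh)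
    -- (B2): f differentiable on H with lower curvature m_f and L_f-Lipschitz gradient
    (f : E → ℝ) (f' : E → E) (mf Lf : ℝ) (hmf : 0 < mf) (hLf : 0 < Lf)
    (hfdiff : ∀ z ∈ H, HasGradientAt f (f' z) z)
    (hflow : ∀ z ∈ H, ∀ z' ∈ H, -(mf / 2) * ‖z' - z‖ ^ 2 ≤ f z' - f z - ⟪f' z, z' - z⟫)
    (hflip : ∀ z ∈ H, ∀ z' ∈ H, ‖f' z' - f' z‖ ≤ Lf * ‖z' - z‖)
    -- (B3): g K-convex and differentiable with L_g-Lipschitz derivative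
    (g : E → F) (g' : E → (E →L[ℝ] F)) (Lg : ℝ) (hLg : 0 < Lg)
    (hgdiff : ∀ z, HasFDerivAt g (g' z) z) (hgK : KConvex K g)
    (hglip : ∀ z z' : E, ‖g' z' - g' z‖ ≤ Lg * ‖z' - z‖)
    -- bounds B_g⁽⁰⁾ and B_g⁽¹⁾
    (Bg0 Bg1 : ℝ) (hBg0 : ∀ z ∈ H, ‖g z‖ ≤ Bg0) (hBg1 : ∀ z ∈ H, ‖g' z‖ ≤ Bg1)
    -- data of the prox subproblem
    (lam σ c : ℝ) (hlam : 0 < lam) (hσ0 : 0 < σ) (hσ1 : σ < 1) (hc : 0 < c)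
    (zm : E) (hzm : zm ∈ H) (pm : F)
    (Lψ : ℝ) (hLψ : Lψ = lam * (Lf + Lg * ‖pm‖ + c * (Bg0 * Lg + Bg1 ^ 2)) + 1)
    (σ' : ℝ) (hσ' : σ' = σ / Real.sqrt Lψ)
    -- the inexact solution (z, v, ε) of the prox subproblem
    (z : E) (hz : z ∈ H) (v : E) (ε : ℝ) (hε : 0 ≤ ε)
    (hv : v ∈ epsSubdiff H
      (fun u => lam * AugLag K f h g c u pm + (1 / 2) * ‖u - zm‖ ^ 2) ε z)
    (hvineq : ‖v‖ ^ 2 + 2 * ε ≤ σ' ^ 2 * ‖v + zm - z‖ ^ 2)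
    -- refined quantities
    (r : E) (hr : r = v + zm - z)
    (δ : ℝ) (hδ : δ = ε / lam)
    (p : F) (hp : IsProjOn (dualCone K) (pm + c • g z) p)
    (zhat : E) (hzhatH : zhat ∈ H)
    (hzhatmin : ∀ u ∈ H,
      lam * (⟪f' z + (g' z).adjoint p, zhat - z⟫ + h zhat) - ⟪r, zhat - z⟫
          + (Lψ / 2) * ‖zhat - z‖ ^ 2 ≤
        lam * (⟪f' z + (g' z).adjoint p, u - z⟫ + h u) - ⟪r, u - z⟫
          + (Lψ / 2) * ‖u - z‖ ^ 2)
    (w : E) (hw : w = (1 / lam) • (r + Lψ • (z - zhat)))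
    (ξ : E) (hξ : ξ = w - f' z - (g' z).adjoint p) :
    -- conclusions
    ξ ∈ epsSubdiff H h δ z ∧
    ‖r‖ ≤ Dh / (1 - σ) ∧
    δ ≤ (1 / (2 * lam)) * (σ * Dh / (1 - σ)) ^ 2 ∧
    ‖w‖ ≤ (1 + σ) * Dh / (lam * (1 - σ)) := by
  -- positivity basics
  have hBg0nn : 0 ≤ Bg0 := le_trans (norm_nonneg (g z)) (hBg0 z hz)
  have hBg1nn : 0 ≤ Bg1 := le_trans (norm_nonneg (g' z)) (hBg1 z hz)
  have hsum0 : 0 ≤ Bg0 * Lg + Bg1 ^ 2 := by linarith only [mul_nonneg hBg0nn hLg.le, sq_nonneg Bg1]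
  have hsum : 0 ≤ Lf + Lg * ‖pm‖ + c * (Bg0 * Lg + Bg1 ^ 2) := by
    linarith only [mul_nonneg hc.le hsum0, mul_nonneg hLg.le (norm_nonneg pm), hLf.le]
  have hLψ1 : 1 ≤ Lψ := by rw [hLψ]; linarith only [mul_nonneg hlam.le hsum]
  have hLψ0 : (0:ℝ) < Lψ := lt_of_lt_of_le one_pos hLψ1
  have h1σ : (0:ℝ) < 1 - σ := by linarith
  have hrn : (0:ℝ) ≤ ‖r‖ := norm_nonneg r
  -- square of σ'
  have hσ'2 : σ' ^ 2 = σ ^ 2 / Lψ := by rw [hσ', div_pow, Real.sq_sqrt hLψ0.le]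
  have hvineq2 : ‖v‖ ^ 2 + 2 * ε ≤ σ ^ 2 / Lψ * ‖r‖ ^ 2 := by
    have := hvineq; rw [hσ'2, ← hr] at this; exact this
  have hineqσ : σ ^ 2 / Lψ * ‖r‖ ^ 2 ≤ σ ^ 2 * ‖r‖ ^ 2 := by
    rw [div_mul_eq_mul_div, div_le_iff₀ hLψ0]
    have hh : 0 ≤ σ ^ 2 * ‖r‖ ^ 2 * (Lψ - 1) :=
      mul_nonneg (mul_nonneg (sq_nonneg σ) (sq_nonneg ‖r‖)) (by linarith only [hLψ1])
    linarith only [hh]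
  have hv_r : ‖v‖ ≤ σ * ‖r‖ := by
    have h3 : ‖v‖ ^ 2 ≤ (σ * ‖r‖) ^ 2 := by linarith only [hvineq2, hineqσ, hε]
    exact le_of_pow_le_pow_left₀ two_ne_zero (mul_nonneg hσ0.le hrn) h3
  have hrDh : ‖r‖ ≤ Dh / (1 - σ) := by
    have h4 : ‖r‖ ≤ ‖v‖ + Dh := by
      rw [hr, show v + zm - z = v + (zm - z) by abel]
      exact le_trans (norm_add_le _ _) (by linarith [hDh zm hzm z hz])
    rw [le_div_iff₀ h1σ]; linarith only [h4, hv_r]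
  -- projection facts
  obtain ⟨hpK, hyp, hpy, hdisteq⟩ := proj_facts K hKne hKcl hKcvx hKcone hp
  -- smooth components
  have hs_f : f zhat - f z - ⟪f' z, zhat - z⟫ ≤ Lf / 2 * ‖zhat - z‖ ^ 2 := by
    have hf'C : ∀ u ∈ H, HasFDerivAt f ((InnerProductSpace.toDual ℝ E) (f' u)) u :=
      fun u hu => (hfdiff u hu).hasFDerivAt
    have hlipf : ∀ u ∈ H,
        ‖(InnerProductSpace.toDual ℝ E) (f' u) - (InnerProductSpace.toDual ℝ E) (f' z)‖
          ≤ Lf * ‖u - z‖ := by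
      intro u hu
      rw [← map_sub, LinearIsometryEquiv.norm_map]
      exact hflip z hz u hu
    have htf := taylor_half hHcvx hLf.le hf'C hz hzhatH hlipf
    rw [InnerProductSpace.toDual_apply_apply, Real.norm_eq_abs] at htf
    exact le_trans (le_abs_self _) htf
  have hs_g : ‖g zhat - g z - g' z (zhat - z)‖ ≤ Lg / 2 * ‖zhat - z‖ ^ 2 :=
    taylor_half hHcvx hLg.le (fun u _ => hgdiff u) hz hzhatH (fun u _ => hglip z u)
  have hs_gd : ‖g zhat - g z‖ ≤ Bg1 * ‖zhat - z‖ :=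
    Convex.norm_image_sub_le_of_norm_hasFDerivWithin_le
      (fun u _ => (hgdiff u).hasFDerivWithinAt) hBg1 hHcvx hz hzhatH
  have hp_norm : ‖p‖ ≤ ‖pm‖ + c * Bg0 := by
    calc ‖p‖ ≤ ‖pm + c • g z‖ := hpy
      _ ≤ ‖pm‖ + ‖c • g z‖ := norm_add_le _ _
      _ = ‖pm‖ + c * ‖g z‖ := by rw [norm_smul, Real.norm_eq_abs, abs_of_pos hc]
      _ ≤ ‖pm‖ + c * Bg0 := by linarith only [mul_le_mul_of_nonneg_left (hBg0 z hz) hc.le]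
  have hp_nn : (0:ℝ) ≤ ‖p‖ := norm_nonneg p
  -- Moreau envelope descent
  have hs2 : (Metric.infDist (pm + c • g zhat) (-K)) ^ 2
      ≤ ‖p‖ ^ 2 + 2 * (c * ⟪p, g zhat - g z⟫) + c ^ 2 * ‖g zhat - g z‖ ^ 2 := by
    have hD1 : Metric.infDist (pm + c • g zhat) (-K)
        ≤ ‖p + c • (g zhat - g z)‖ := by
      have h0 := Metric.infDist_le_dist_of_mem (x := pm + c • g zhat) hyp
      rw [dist_eq_norm, show pm + c • g zhat - (pm + c • g z - p) = p + c • (g zhat - g z) by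
        rw [smul_sub]; abel] at h0
      exact h0
    have hnn := Metric.infDist_nonneg (x := pm + c • g zhat) (s := -K)
    have hsq : (Metric.infDist (pm + c • g zhat) (-K)) ^ 2
        ≤ ‖p + c • (g zhat - g z)‖ ^ 2 := by
        linarith only [mul_self_le_mul_self hnn hD1]
    rw [norm_add_sq_real, real_inner_smul_right, norm_smul, Real.norm_eq_abs,
      abs_of_pos hc, mul_pow] at hsq
    linarith
  have hs3 : ⟪p, g zhat - g z⟫ ≤ ⟪(g' z).adjoint p, zhat - z⟫
      + (‖pm‖ + c * Bg0) * (Lg / 2 * ‖zhat - z‖ ^ 2) := by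
    have hadj : ⟪(g' z).adjoint p, zhat - z⟫ = ⟪p, g' z (zhat - z)⟫ :=
      ContinuousLinearMap.adjoint_inner_left (g' z) (zhat - z) p
    have hsplit : ⟪p, g zhat - g z⟫
        = ⟪p, g' z (zhat - z)⟫ + ⟪p, g zhat - g z - g' z (zhat - z)⟫ := by
      rw [← inner_add_right]; congr 1; abel
    have hb : ⟪p, g zhat - g z - g' z (zhat - z)⟫ ≤ ‖p‖ * (Lg / 2 * ‖zhat - z‖ ^ 2) :=
      le_trans (real_inner_le_norm _ _) (mul_le_mul_of_nonneg_left hs_g hp_nn)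
    have hb2 : ‖p‖ * (Lg / 2 * ‖zhat - z‖ ^ 2) ≤ (‖pm‖ + c * Bg0) * (Lg / 2 * ‖zhat - z‖ ^ 2) :=
      mul_le_mul_of_nonneg_right hp_norm (by positivity)
    rw [hsplit, hadj]
    linarith
  have hs6 : ‖zhat - zm‖ ^ 2 = ‖z - zm‖ ^ 2 + 2 * ⟪z - zm, zhat - z⟫ + ‖zhat - z‖ ^ 2 := by
    rw [show zhat - zm = (z - zm) + (zhat - z) by abel, norm_add_sq_real]
  have hvd : ⟪v, zhat - z⟫ = ⟪r, zhat - z⟫ + ⟪z - zm, zhat - z⟫ := by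
    rw [show v = r + (z - zm) by rw [hr]; abel, inner_add_left]
  -- the ε-subgradient inequality at ẑ
  have hC := hv zhat hzhatH
  simp only [AugLag] at hC
  rw [hdisteq] at hC
  -- key inequality 1
  have hkey1 : lam * h z - lam * h zhat ≤ lam * ⟪f' z, zhat - z⟫
      + lam * ⟪(g' z).adjoint p, zhat - z⟫ - ⟪r, zhat - z⟫ + Lψ / 2 * ‖zhat - z‖ ^ 2 + ε := by
    have m1 := mul_le_mul_of_nonneg_left hs_f hlam.le
    have m2 := mul_le_mul_of_nonneg_left hs2 (by positivity : (0:ℝ) ≤ lam * (1 / (2 * c)))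
    have e2 : lam * (1 / (2 * c)) * (‖p‖ ^ 2 + 2 * (c * ⟪p, g zhat - g z⟫)
          + c ^ 2 * ‖g zhat - g z‖ ^ 2)
        = lam * (1 / (2 * c)) * ‖p‖ ^ 2 + lam * ⟪p, g zhat - g z⟫
          + lam * (c / 2) * ‖g zhat - g z‖ ^ 2 := by
      field_simp
    have m2' := m2.trans_eq e2
    have m3 := mul_le_mul_of_nonneg_left hs3 hlam.le
    have m4 : lam * (c / 2) * ‖g zhat - g z‖ ^ 2
        ≤ lam * (c / 2) * (Bg1 ^ 2 * ‖zhat - z‖ ^ 2) := by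
      have hq : ‖g zhat - g z‖ ^ 2 ≤ Bg1 ^ 2 * ‖zhat - z‖ ^ 2 := by
        linarith only [mul_self_le_mul_self (norm_nonneg (g zhat - g z)) hs_gd]
      exact mul_le_mul_of_nonneg_left hq (by positivity)
    have hLq : Lψ * ‖zhat - z‖ ^ 2
        = (lam * (Lf + Lg * ‖pm‖ + c * (Bg0 * Lg + Bg1 ^ 2)) + 1) * ‖zhat - z‖ ^ 2 := by
      rw [hLψ]
    linarith only [hC, m1, m2', m3, m4, hvd, hs6, hLq]
  -- strong convexity of the prox model
  have hsc : ∀ z' ∈ H,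
      lam * (⟪f' z + (g' z).adjoint p, zhat - z⟫ + h zhat) - ⟪r, zhat - z⟫
          + (Lψ / 2) * ‖zhat - z‖ ^ 2 + Lψ / 2 * ‖z' - zhat‖ ^ 2 ≤
        lam * (⟪f' z + (g' z).adjoint p, z' - z⟫ + h z') - ⟪r, z' - z⟫
          + (Lψ / 2) * ‖z' - z‖ ^ 2 := by
    intro z' hz'
    apply le_of_forall_pos_le_add
    intro η hη
    set Q := ‖z' - zhat‖ ^ 2 with hQ
    have hQnn : 0 ≤ Q := sq_nonneg _
    set t := min 1 (η / (Lψ / 2 * Q + 1)) with htdef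
    have hden : (0:ℝ) < Lψ / 2 * Q + 1 := by linarith only [mul_nonneg hLψ0.le hQnn]
    have ht0 : 0 < t := lt_min one_pos (div_pos hη hden)
    have ht1 : t ≤ 1 := min_le_left _ _
    have hmemut : t • z' + (1 - t) • zhat ∈ H :=
      hHcvx hz' hzhatH ht0.le (by linarith) (by ring)
    have hconvh : h (t • z' + (1 - t) • zhat) ≤ t * h z' + (1 - t) * h zhat :=
      hhcvx.2 hz' hzhatH ht0.le (by linarith) (by ring)
    have hlamconv := mul_le_mul_of_nonneg_left hconvh hlam.le
    have hmin := hzhatmin _ hmemut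
    have edif : t • z' + (1 - t) • zhat - z = t • (z' - z) + (1 - t) • (zhat - z) := by
      module
    have es : ⟪f' z + (g' z).adjoint p, t • z' + (1 - t) • zhat - z⟫
        = t * ⟪f' z + (g' z).adjoint p, z' - z⟫
          + (1 - t) * ⟪f' z + (g' z).adjoint p, zhat - z⟫ := by
      rw [edif, inner_add_right, real_inner_smul_right, real_inner_smul_right]
    have er : ⟪r, t • z' + (1 - t) • zhat - z⟫
        = t * ⟪r, z' - z⟫ + (1 - t) * ⟪r, zhat - z⟫ := by
      rw [edif, inner_add_right, real_inner_smul_right, real_inner_smul_right]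
    have en : ‖t • z' + (1 - t) • zhat - z‖ ^ 2
        = t * ‖z' - z‖ ^ 2 + (1 - t) * ‖zhat - z‖ ^ 2 - t * (1 - t) * Q := by
      rw [edif, norm_combo, hQ, show z' - z - (zhat - z) = z' - zhat by abel]
    rw [es, er, en] at hmin
    have hcomb : t * (lam * (⟪f' z + (g' z).adjoint p, zhat - z⟫ + h zhat) - ⟪r, zhat - z⟫
          + (Lψ / 2) * ‖zhat - z‖ ^ 2 + Lψ / 2 * (1 - t) * Q)
        ≤ t * (lam * (⟪f' z + (g' z).adjoint p, z' - z⟫ + h z') - ⟪r, z' - z⟫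
          + (Lψ / 2) * ‖z' - z‖ ^ 2) := by
      linarith only [hmin, hlamconv]
    have hmain := (mul_le_mul_iff_right₀ ht0).1 hcomb
    have htb : Lψ / 2 * t * Q ≤ η := by
      have htr : t ≤ η / (Lψ / 2 * Q + 1) := min_le_right _ _
      rw [le_div_iff₀ hden] at htr
      linarith only [htr, ht0.le]
    linarith
  -- exact subgradient at ẑ
  have eξ : lam • ξ = r + Lψ • (z - zhat) - lam • (f' z + (g' z).adjoint p) := by
    rw [hξ, hw, smul_sub, smul_sub, smul_smul, mul_one_div, div_self (ne_of_gt hlam), one_smul]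
    module
  have hsub : ∀ z' ∈ H, lam * h zhat + lam * ⟪ξ, z' - zhat⟫ ≤ lam * h z' := by
    intro z' hz'
    have hsc' := hsc z' hz'
    have elam : lam * ⟪ξ, z' - zhat⟫ = ⟪r, z' - zhat⟫ + Lψ * ⟪z - zhat, z' - zhat⟫
        - lam * ⟪f' z + (g' z).adjoint p, z' - zhat⟫ := by
      rw [← real_inner_smul_left, eξ, inner_sub_left, inner_add_left,
        real_inner_smul_left, real_inner_smul_left]
    have en : ‖z' - z‖ ^ 2 = ‖zhat - z‖ ^ 2 + 2 * ⟪zhat - z, z' - zhat⟫ + ‖z' - zhat‖ ^ 2 := by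
      rw [show z' - z = (zhat - z) + (z' - zhat) by abel, norm_add_sq_real]
    have es : ⟪f' z + (g' z).adjoint p, z' - z⟫ = ⟪f' z + (g' z).adjoint p, zhat - z⟫
        + ⟪f' z + (g' z).adjoint p, z' - zhat⟫ := by
      rw [show z' - z = (zhat - z) + (z' - zhat) by abel, inner_add_right]
    have er : ⟪r, z' - z⟫ = ⟪r, zhat - z⟫ + ⟪r, z' - zhat⟫ := by
      rw [show z' - z = (zhat - z) + (z' - zhat) by abel, inner_add_right]
    have eneg : ⟪z - zhat, z' - zhat⟫ = -⟪zhat - z, z' - zhat⟫ := by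
      rw [show z - zhat = -(zhat - z) by abel, inner_neg_left]
    have esl : lam * ⟪f' z + (g' z).adjoint p, z' - z⟫
        = lam * ⟪f' z + (g' z).adjoint p, zhat - z⟫
          + lam * ⟪f' z + (g' z).adjoint p, z' - zhat⟫ := by rw [es]; ring
    have enl : Lψ * ‖z' - z‖ ^ 2 = Lψ * ‖zhat - z‖ ^ 2 + 2 * (Lψ * ⟪zhat - z, z' - zhat⟫)
        + Lψ * ‖z' - zhat‖ ^ 2 := by rw [en]; ring
    have enegl : Lψ * ⟪z - zhat, z' - zhat⟫ = -(Lψ * ⟪zhat - z, z' - zhat⟫) := by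
      rw [eneg]; ring
    linarith only [hsc', elam, enl, esl, er, enegl]
  -- key: λ⟨ξ, z - ẑ⟩ expansion
  have hnd : ‖z - zhat‖ = ‖zhat - z‖ := norm_sub_rev _ _
  have elam2 : lam * ⟪ξ, z - zhat⟫ = -⟪r, zhat - z⟫ + Lψ * ‖zhat - z‖ ^ 2
      + lam * ⟪f' z + (g' z).adjoint p, zhat - z⟫ := by
    rw [← real_inner_smul_left, eξ, inner_sub_left, inner_add_left, real_inner_smul_left,
      real_inner_smul_left, show z - zhat = -(zhat - z) by abel, inner_neg_right,
      inner_neg_right, inner_neg_left, inner_neg_right, real_inner_self_eq_norm_sq]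
    ring
  have hsub_z := hsub z hz
  have ezz : ⟪ξ, z - zhat⟫ = -⟪ξ, zhat - z⟫ := by
    rw [show z - zhat = -(zhat - z) by abel, inner_neg_right]
  have esplit : ⟪f' z + (g' z).adjoint p, zhat - z⟫
      = ⟪f' z, zhat - z⟫ + ⟪(g' z).adjoint p, zhat - z⟫ := inner_add_left _ _ _
  have esplitl : lam * ⟪f' z + (g' z).adjoint p, zhat - z⟫
      = lam * ⟪f' z, zhat - z⟫ + lam * ⟪(g' z).adjoint p, zhat - z⟫ := by
    rw [inner_add_left]; ring
  -- (Lψ/2)‖ẑ-z‖² ≤ ε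
  have hLψd : Lψ / 2 * ‖zhat - z‖ ^ 2 ≤ ε := by
    linarith only [hkey1, hsub_z, elam2, esplitl]
  -- conclusion 1
  have concl1 : ξ ∈ epsSubdiff H h δ z := by
    intro z' hz'
    have hsub' := hsub z' hz'
    have e5 : lam * ⟪ξ, z' - z⟫ = lam * ⟪ξ, z' - zhat⟫ - lam * ⟪ξ, z - zhat⟫ := by
      rw [show z' - z = (z' - zhat) - (z - zhat) by abel, inner_sub_right]
      ring
    have elamδ : lam * δ = ε := by rw [hδ]; field_simp
    have hA : lam * h z - lam * h zhat - lam * ⟪ξ, z - zhat⟫ ≤ ε := by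
      linarith only [hkey1, elam2, esplitl, mul_nonneg hLψ0.le (sq_nonneg ‖zhat - z‖)]
    have hfin : lam * h z + lam * ⟪ξ, z' - z⟫ - lam * δ ≤ lam * h z' := by
      linarith only [hsub', hA, e5, elamδ]
    have hfin2 : lam * (h z + ⟪ξ, z' - z⟫ - δ) ≤ lam * h z' := by
      linarith only [hfin]
    exact (mul_le_mul_iff_right₀ hlam).1 hfin2
  -- conclusion 3
  have concl3 : δ ≤ (1 / (2 * lam)) * (σ * Dh / (1 - σ)) ^ 2 := by
    have h2ε : 2 * ε ≤ (σ * Dh / (1 - σ)) ^ 2 := by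
      have hrr : σ ^ 2 * ‖r‖ ^ 2 ≤ (σ * Dh / (1 - σ)) ^ 2 := by
        have : σ * ‖r‖ ≤ σ * (Dh / (1 - σ)) := mul_le_mul_of_nonneg_left hrDh hσ0.le
        have h0 : (σ * ‖r‖) ^ 2 ≤ (σ * (Dh / (1 - σ))) ^ 2 := by
          linarith only [mul_self_le_mul_self (mul_nonneg hσ0.le hrn) this]
        calc σ ^ 2 * ‖r‖ ^ 2 = (σ * ‖r‖) ^ 2 := by ring
          _ ≤ (σ * (Dh / (1 - σ))) ^ 2 := h0
          _ = (σ * Dh / (1 - σ)) ^ 2 := by ring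
      linarith only [hvineq2, hineqσ, hrr, sq_nonneg ‖v‖]
    rw [hδ, div_le_iff₀ hlam]
    calc ε ≤ (σ * Dh / (1 - σ)) ^ 2 / 2 := by linarith
      _ = 1 / (2 * lam) * (σ * Dh / (1 - σ)) ^ 2 * lam := by field_simp
  -- conclusion 4
  have concl4 : ‖w‖ ≤ (1 + σ) * Dh / (lam * (1 - σ)) := by
    have hLd : Lψ * ‖zhat - z‖ ≤ σ * ‖r‖ := by
      have h1 : (Lψ * ‖zhat - z‖) ^ 2 ≤ (σ * ‖r‖) ^ 2 := by
        have h2 : Lψ * ‖zhat - z‖ ^ 2 ≤ 2 * ε := by linarith only [hLψd]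
        have h3 : 2 * ε * Lψ ≤ σ ^ 2 * ‖r‖ ^ 2 := by
          have h4 : 2 * ε ≤ σ ^ 2 / Lψ * ‖r‖ ^ 2 := by
            linarith only [hvineq2, sq_nonneg ‖v‖]
          rw [div_mul_eq_mul_div] at h4
          calc 2 * ε * Lψ ≤ (σ ^ 2 * ‖r‖ ^ 2 / Lψ) * Lψ := by
                exact mul_le_mul_of_nonneg_right h4 hLψ0.le
            _ = σ ^ 2 * ‖r‖ ^ 2 := by field_simp
        linarith only [mul_le_mul_of_nonneg_left h2 hLψ0.le, h3]
      exact le_of_pow_le_pow_left₀ two_ne_zero (mul_nonneg hσ0.le hrn) h1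
    have hwn : ‖w‖ ≤ (1 / lam) * (‖r‖ + Lψ * ‖zhat - z‖) := by
      rw [hw, norm_smul, Real.norm_eq_abs, abs_of_pos (by positivity : (0:ℝ) < 1 / lam)]
      have : ‖r + Lψ • (z - zhat)‖ ≤ ‖r‖ + Lψ * ‖zhat - z‖ := by
        calc ‖r + Lψ • (z - zhat)‖ ≤ ‖r‖ + ‖Lψ • (z - zhat)‖ := norm_add_le _ _
          _ = ‖r‖ + Lψ * ‖zhat - z‖ := by
              rw [norm_smul, Real.norm_eq_abs, abs_of_pos hLψ0, ← hnd]
      exact mul_le_mul_of_nonneg_left this (by positivity)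
    calc ‖w‖ ≤ (1 / lam) * (‖r‖ + Lψ * ‖zhat - z‖) := hwn
      _ ≤ (1 / lam) * (‖r‖ + σ * ‖r‖) := by
          apply mul_le_mul_of_nonneg_left _ (by positivity)
          linarith
      _ = (1 + σ) / lam * ‖r‖ := by ring
      _ ≤ (1 + σ) / lam * (Dh / (1 - σ)) := by
          apply mul_le_mul_of_nonneg_left hrDh (by positivity)
      _ = (1 + σ) * Dh / (lam * (1 - σ)) := by field_simp
  exact ⟨concl1, hrDh, concl3, concl4⟩
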